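/- Fix n > 1, let X be a subspace of V(n), fix i₀ with 1 ≤ i₀ ≤ n − 2, and set Z := X ∩ φ_{i₀}⁻¹(span(φ_{i₀+1}(X) ∪ ⋯ ∪ φ_n(X))). If d := dim(X ∩ span{v[j,i] : i₀ ≤ i < j ≤ n}), then dim(Z) ≤ r(d); equivalently, dim(Z) ≤ d − ⌈(√(8d+1) − 1)/2⌉, where ⌈x⌉ denotes the smallest integer greater than or equal to x. -/

import Mathlib

open Submodule

/-- Index type for the distinguished basis of `V(n)`: pairs `(j,i)` with `i < j`. -/
abbrev VIdx (n : ℕ) := {q : Fin n × Fin n // q.2 < q.1}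

/-- Index type for the distinguished basis of `W(n)`: triples `(j,i,k)` with `i < j`, `i ≤ k`. -/
abbrev WIdx (n : ℕ) := {t : Fin n × Fin n × Fin n // t.2.1 < t.1 ∧ t.2.1 ≤ t.2.2}

/-- The vector space `V(n)` over `F`. -/
abbrev V (F : Type*) [Field F] (n : ℕ) := VIdx n → F

/-- The vector space `W(n)` over `F`. -/
abbrev W (F : Type*) [Field F] (n : ℕ) := WIdx n → F

variable (F : Type*) [Field F] (n : ℕ)

/-- The vector `v[j,i]`, with the conventions `v[i,j] = -v[j,i]` and `v[i,i] = 0`. -/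
noncomputable def v (j i : Fin n) : V F n :=
  if h : i < j then Pi.single (⟨(j, i), h⟩ : VIdx n) 1
  else if h' : j < i then -Pi.single (⟨(i, j), h'⟩ : VIdx n) 1
  else 0

/-- The vector `w[j,i,k]` (the basis vector when `i < j` and `i ≤ k`, zero otherwise). -/
noncomputable def w (j i k : Fin n) : W F n :=
  if h : i < j ∧ i ≤ k then Pi.single (⟨(j, i, k), h⟩ : WIdx n) 1 else 0

/-- The linear map `φ_k : V(n) → W(n)` determined on basis vectors by
`φ_k(v[j,i]) = w[j,i,k]` if `i ≤ k`, and `φ_k(v[j,i]) = w[j,k,i] - w[i,k,j]` if `k < i`. -/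
noncomputable def phi (k : Fin n) : V F n →ₗ[F] W F n :=
  (Pi.basisFun F (VIdx n)).constr F fun q =>
    if q.1.2 ≤ k then w F n q.1.1 q.1.2 k
    else w F n q.1.1 k q.1.2 - w F n q.1.2 k q.1.1

/-- The linear map `Φ_n : V(n)ⁿ → W(n)`, `Φ_n(x₁,…,x_n) = φ₁(x₁) + ⋯ + φ_n(x_n)`. -/
noncomputable def Phi : (Fin n → V F n) →ₗ[F] W F n :=
  ∑ k : Fin n, (phi F n k).comp (LinearMap.proj k)

/-- For `X ≤ V(n)`, the subspace `X* ≤ W(n)`: the span of `φ₁(X) ∪ ⋯ ∪ φ_n(X)`. -/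
noncomputable def starV (X : Submodule F (V F n)) : Submodule F (W F n) :=
  ⨆ k : Fin n, X.map (phi F n k)

/-- For `Y ≤ W(n)`, the subspace `Y* ≤ V(n)`: the intersection `⋂ₖ φ_k⁻¹(Y)`. -/
noncomputable def starW (Y : Submodule F (W F n)) : Submodule F (V F n) :=
  ⨅ k : Fin n, Y.comap (phi F n k)

/-- `Z = X ∩ φ_{i₀}⁻¹(span(φ_{i₀+1}(X) ∪ ⋯ ∪ φ_n(X)))`. -/
noncomputable def Zsub (X : Submodule F (V F n)) (i : Fin n) : Submodule F (V F n) :=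
  X ⊓ Submodule.comap (phi F n i)
    (⨆ j : Fin n, ⨆ _ : i < j, Submodule.map (phi F n j) X)

/-- `X ∩ span{v[s,r] : m ≤ r < s ≤ n}` (indices written 0-based, `m : ℕ`). -/
noncomputable def Dsub (X : Submodule F (V F n)) (m : ℕ) : Submodule F (V F n) :=
  X ⊓ Submodule.span F
    {x : V F n | ∃ s r : Fin n, m ≤ (r : ℕ) ∧ r < s ∧ x = v F n s r}

/-- `r(d)`: the largest integer `r` with `r ≤ d` and `r ≤ C(d − r, 2)`. -/
def rfun (d : ℕ) : ℕ :=
  Nat.findGreatest (fun r => r ≤ d ∧ r ≤ (d - r).choose 2) d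

/-- vectors supported on pairs `(j,i)` with `m ≤ i`. -/
def Smod (m : ℕ) : Submodule F (V F n) where
  carrier := {x | ∀ q : VIdx n, (q.1.2 : ℕ) < m → x q = 0}
  add_mem' := by intro a b ha hb q hq; simp [ha q hq, hb q hq]
  zero_mem' := by intro q hq; rfl
  smul_mem' := by intro c x hx q hq; simp [hx q hq]

lemma w_apply (j i k : Fin n) (t : WIdx n) :
    w F n j i k t = if t.1 = (j, i, k) then 1 else 0 := by
  unfold w
  split
  · rename_i h
    rw [Pi.single_apply]
    congr 1
    rw [Subtype.ext_iff]
  · rename_i h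
    rw [if_neg]
    · rfl
    · intro he
      have := t.2
      rw [he] at this
      exact h this

lemma phi_apply (k : Fin n) (x : V F n) (t : WIdx n) :
    phi F n k x t = ∑ q : VIdx n, x q *
      (if q.1.2 ≤ k then (if t.1 = (q.1.1, q.1.2, k) then 1 else 0)
       else ((if t.1 = (q.1.1, k, q.1.2) then 1 else 0)
         - (if t.1 = (q.1.2, k, q.1.1) then 1 else 0))) := by
  unfold phi
  rw [Module.Basis.constr_apply_fintype]
  rw [show ((∑ q : VIdx n, (Pi.basisFun F (VIdx n)).equivFun x q •
      (if q.1.2 ≤ k then w F n q.1.1 q.1.2 k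
       else w F n q.1.1 k q.1.2 - w F n q.1.2 k q.1.1)) t
    = ∑ q : VIdx n, x q • ((if q.1.2 ≤ k then w F n q.1.1 q.1.2 k
       else w F n q.1.1 k q.1.2 - w F n q.1.2 k q.1.1) t)) from by
    rw [Finset.sum_apply]; simp [Pi.basisFun_equivFun]]
  refine Finset.sum_congr rfl fun q _ => ?_
  rw [smul_eq_mul]
  congr 1
  split
  · rw [w_apply]
  · rw [Pi.sub_apply, w_apply, w_apply]

variable {F} {n}

/-- The antisymmetric matrix of a vector `z ∈ V(n)`. -/
noncomputable def Cfun (z : V F n) (β κ : Fin n) : F :=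
  if h : κ < β then z ⟨(β, κ), h⟩ else if h' : β < κ then -z ⟨(κ, β), h'⟩ else 0

lemma Cfun_anti (z : V F n) (β κ : Fin n) : Cfun z κ β = -Cfun z β κ := by
  unfold Cfun
  rcases lt_trichotomy β κ with h | h | h
  · rw [dif_pos h, dif_neg (asymm h), dif_pos h, neg_neg]
  · subst h; simp
  · rw [dif_neg (asymm h), dif_pos h, dif_pos h]

lemma Cfun_self (z : V F n) (q : VIdx n) : Cfun z q.1.1 q.1.2 = z q := by
  unfold Cfun
  rw [dif_pos q.2]

/-- E0: coordinates with third index `< k` vanish in `phi k x`. -/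
lemma phi_eval_zero_of_third_lt (k : Fin n) (x : V F n) (t : WIdx n)
    (h : t.1.2.2 < k) : phi F n k x t = 0 := by
  rw [phi_apply]
  refine Finset.sum_eq_zero fun q _ => ?_
  apply mul_eq_zero_of_right
  have hq := q.2
  split_ifs with h1 h2 h3 h4 h5
  all_goals first
    | (exfalso
       simp only [Prod.ext_iff, Fin.ext_iff, Fin.lt_def, Fin.le_def, not_le] at *
       omega)
    | norm_num

/-- E1: `phi k x (j,i,k) = x (j,i)` when `i ≤ k`. -/
lemma phi_eval_low (k : Fin n) (x : V F n) {j i : Fin n} (hij : i < j) (hik : i ≤ k) :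
    phi F n k x ⟨(j, i, k), ⟨hij, hik⟩⟩ = x ⟨(j, i), hij⟩ := by
  rw [phi_apply]
  rw [Finset.sum_eq_single (⟨(j, i), hij⟩ : VIdx n)]
  · rw [if_pos hik, if_pos rfl, mul_one]
  · intro q _ hq
    apply mul_eq_zero_of_right
    have hq2 := q.2
    split_ifs with h1 h2 h3 h4 h5
    all_goals first
      | (exfalso
         simp only [ne_eq, Subtype.ext_iff, Prod.ext_iff, Fin.ext_iff, Fin.lt_def,
           Fin.le_def, not_le, not_and] at *
         omega)
      | norm_num
  · intro hmem; exact absurd (Finset.mem_univ _) hmem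

/-- E2: for `z` supported on second index `> i₀`:
`phi i₀ z (β,i₀,κ) = Cfun z β κ` when `i₀ < β`, `i₀ < κ`. -/
lemma phi_eval_mid (i₀ : Fin n) (z : V F n)
    (hz : ∀ q : VIdx n, (q.1.2 : ℕ) ≤ (i₀ : ℕ) → z q = 0)
    {β κ : Fin n} (hβ : i₀ < β) (hκ : i₀ < κ) :
    phi F n i₀ z ⟨(β, i₀, κ), ⟨hβ, le_of_lt hκ⟩⟩ = Cfun z β κ := by
  rw [phi_apply]
  rcases lt_trichotomy κ β with hc | hc | hc
  · rw [Finset.sum_eq_single (⟨(β, κ), hc⟩ : VIdx n)]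
    · have hne : ¬(((β, i₀, κ) : Fin n × Fin n × Fin n) = (κ, i₀, β)) := by
        intro he
        simp only [Prod.ext_iff, Fin.ext_iff] at he
        omega
      rw [Cfun, dif_pos hc, if_neg (not_le.mpr hκ), if_pos rfl, if_neg hne, sub_zero,
        mul_one]
    · intro q _ hq
      by_cases hql : (q.1.2 : ℕ) ≤ (i₀ : ℕ)
      · rw [hz q hql, zero_mul]
      · apply mul_eq_zero_of_right
        have hq2 := q.2
        split_ifs with h1 h2 h3 h4 h5
        all_goals first
          | (exfalso
             simp only [ne_eq, Subtype.ext_iff, Prod.ext_iff, Fin.ext_iff, Fin.lt_def,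
               Fin.le_def, not_le, not_and] at *
             omega)
          | norm_num
    · intro hmem; exact absurd (Finset.mem_univ _) hmem
  · subst hc
    rw [Cfun, dif_neg (lt_irrefl _), dif_neg (lt_irrefl _)]
    refine Finset.sum_eq_zero fun q _ => ?_
    by_cases hql : (q.1.2 : ℕ) ≤ (i₀ : ℕ)
    · rw [hz q hql, zero_mul]
    · apply mul_eq_zero_of_right
      have hq2 := q.2
      split_ifs with h1 h2 h3 h4 h5
      all_goals first
        | (exfalso
           simp only [ne_eq, Subtype.ext_iff, Prod.ext_iff, Fin.ext_iff, Fin.lt_def,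
             Fin.le_def, not_le, not_and] at *
           omega)
        | norm_num
  · rw [Finset.sum_eq_single (⟨(κ, β), hc⟩ : VIdx n)]
    · have hne : ¬(((β, i₀, κ) : Fin n × Fin n × Fin n) = (κ, i₀, β)) := by
        intro he
        simp only [Prod.ext_iff, Fin.ext_iff] at he
        omega
      rw [Cfun, dif_neg (asymm hc), dif_pos hc, if_neg (not_le.mpr hβ), if_neg hne,
        if_pos rfl]
      ring
    · intro q _ hq
      by_cases hql : (q.1.2 : ℕ) ≤ (i₀ : ℕ)
      · rw [hz q hql, zero_mul]
      · apply mul_eq_zero_of_right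
        have hq2 := q.2
        split_ifs with h1 h2 h3 h4 h5
        all_goals first
          | (exfalso
             simp only [ne_eq, Subtype.ext_iff, Prod.ext_iff, Fin.ext_iff, Fin.lt_def,
               Fin.le_def, not_le, not_and] at *
             omega)
          | norm_num
    · intro hmem; exact absurd (Finset.mem_univ _) hmem

/-- E3: for `a ≤ i₀ < k`: `phi k x (b,a,κ) = if κ = k then x (b,a) else 0`. -/
lemma phi_eval_high (i₀ k : Fin n) (x : V F n) {b a κ : Fin n}
    (ha : (a : ℕ) ≤ (i₀ : ℕ)) (hk : i₀ < k) (hab : a < b) (haκ : a ≤ κ) :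
    phi F n k x ⟨(b, a, κ), ⟨hab, haκ⟩⟩ = if κ = k then x ⟨(b, a), hab⟩ else 0 := by
  rw [phi_apply]
  by_cases hκk : κ = k
  · subst hκk
    rw [if_pos rfl]
    rw [Finset.sum_eq_single (⟨(b, a), hab⟩ : VIdx n)]
    · rw [if_pos (by simp only [Fin.le_def]; omega), if_pos rfl, mul_one]
    · intro q _ hq
      apply mul_eq_zero_of_right
      have hq2 := q.2
      split_ifs with h1 h2 h3 h4 h5
      all_goals first
        | (exfalso
           simp only [ne_eq, Subtype.ext_iff, Prod.ext_iff, Fin.ext_iff, Fin.lt_def,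
             Fin.le_def, not_le, not_and] at *
           omega)
        | norm_num
    · intro hmem; exact absurd (Finset.mem_univ _) hmem
  · rw [if_neg hκk]
    refine Finset.sum_eq_zero fun q _ => ?_
    apply mul_eq_zero_of_right
    have hq2 := q.2
    have hκk' : (κ : ℕ) ≠ (k : ℕ) := fun he => hκk (Fin.ext he)
    split_ifs with h1 h2 h3 h4 h5
    all_goals first
      | (exfalso
         simp only [ne_eq, Subtype.ext_iff, Prod.ext_iff, Fin.ext_iff, Fin.lt_def,
           Fin.le_def, not_le, not_and] at *
         omega)
      | norm_num

/-- E4: for `z` supported on second index `> i₀` and `a < i₀`: `phi i₀ z (b,a,κ) = 0`. -/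
lemma phi_eval_lowmid_zero (i₀ : Fin n) (z : V F n)
    (hz : ∀ q : VIdx n, (q.1.2 : ℕ) ≤ (i₀ : ℕ) → z q = 0)
    {b a κ : Fin n} (ha : (a : ℕ) < (i₀ : ℕ)) (hab : a < b) (haκ : a ≤ κ) :
    phi F n i₀ z ⟨(b, a, κ), ⟨hab, haκ⟩⟩ = 0 := by
  rw [phi_apply]
  refine Finset.sum_eq_zero fun q _ => ?_
  by_cases hql : (q.1.2 : ℕ) ≤ (i₀ : ℕ)
  · rw [hz q hql, zero_mul]
  · apply mul_eq_zero_of_right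
    have hq2 := q.2
    split_ifs with h1 h2 h3 h4 h5
    all_goals first
      | (exfalso
         simp only [ne_eq, Subtype.ext_iff, Prod.ext_iff, Fin.ext_iff, Fin.lt_def,
           Fin.le_def, not_le, not_and] at *
         omega)
      | norm_num

lemma mem_Smod {m : ℕ} {x : V F n} :
    x ∈ Smod F n m ↔ ∀ q : VIdx n, (q.1.2 : ℕ) < m → x q = 0 := Iff.rfl

lemma span_v_eq_Smod (m : ℕ) :
    span F {x : V F n | ∃ s r : Fin n, m ≤ (r : ℕ) ∧ r < s ∧ x = v F n s r}
      = Smod F n m := by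
  apply le_antisymm
  · rw [span_le]
    rintro x ⟨s, r, hmr, hrs, rfl⟩ q hq
    rw [v, dif_pos hrs, Pi.single_apply, if_neg]
    intro he
    rw [Subtype.ext_iff] at he
    have : q.1.2 = r := by rw [he]
    rw [this] at hq
    omega
  · intro x hx
    rw [← Finset.univ_sum_single x]
    refine Submodule.sum_mem _ fun q _ => ?_
    by_cases hq : (q.1.2 : ℕ) < m
    · rw [hx q hq]
      simp
    · have h1 : Pi.single q (x q) = x q • v F n q.1.1 q.1.2 := by
        rw [v, dif_pos q.2]
        rw [← Pi.single_smul, smul_eq_mul, mul_one]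
      rw [h1]
      exact Submodule.smul_mem _ _ (subset_span ⟨q.1.1, q.1.2, le_of_not_gt hq, q.2, rfl⟩)

lemma Zsub_support {X : Submodule F (V F n)} {i₀ : Fin n} {z : V F n}
    (hz : z ∈ Zsub F n X i₀) :
    ∀ q : VIdx n, (q.1.2 : ℕ) ≤ (i₀ : ℕ) → z q = 0 := by
  intro q hq
  have hle : (⨆ j : Fin n, ⨆ _ : i₀ < j, Submodule.map (phi F n j) X) ≤
      LinearMap.ker (LinearMap.proj (⟨(q.1.1, q.1.2, i₀), ⟨q.2, by rwa [Fin.le_def]⟩⟩ : WIdx n)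
        ∘ₗ (LinearMap.id : W F n →ₗ[F] W F n)) := by
    refine iSup_le fun j => iSup_le fun hj => ?_
    rintro y ⟨x, _, rfl⟩
    simp only [LinearMap.mem_ker, LinearMap.comp_apply, LinearMap.id_apply, LinearMap.proj_apply]
    exact phi_eval_zero_of_third_lt j x _ hj
  have h0 := hle hz.2
  simp only [LinearMap.mem_ker, LinearMap.comp_apply, LinearMap.id_apply,
    LinearMap.proj_apply] at h0
  rw [phi_eval_low i₀ z q.2 (by rwa [Fin.le_def])] at h0
  exact h0

/-- The projection extracting the `i₀`-column coefficients. -/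
noncomputable def pimap (i₀ : Fin n) : V F n →ₗ[F] (Fin n → F) where
  toFun x β := if h : i₀ < β then x ⟨(β, i₀), h⟩ else 0
  map_add' x y := by funext β; by_cases h : i₀ < β <;> simp [h]
  map_smul' c x := by funext β; by_cases h : i₀ < β <;> simp [h]

lemma col_mem (X : Submodule F (V F n)) (i₀ : Fin n)
    {z : V F n} (hz : z ∈ Zsub F n X i₀) (κ : Fin n) :
    (fun β => Cfun z β κ) ∈ (X ⊓ Smod F n (i₀ : ℕ)).map (pimap i₀) := by
  have hzs := Zsub_support hz
  by_cases hκ : i₀ < κ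
  · obtain ⟨f, hf, hsum⟩ := (Submodule.mem_iSup_iff_exists_finsupp _ _).mp hz.2
    have hchoice : ∀ j : Fin n, ∃ x : V F n, x ∈ X ∧ phi F n j x = f j ∧ (i₀ < j ∨ x = 0) := by
      intro j
      by_cases hj : i₀ < j
      · have hfj := hf j
        rw [iSup_pos hj] at hfj
        obtain ⟨x, hxX, hxe⟩ := hfj
        exact ⟨x, hxX, hxe, Or.inl hj⟩
      · have hfj := hf j
        rw [iSup_neg hj] at hfj
        rw [mem_bot] at hfj
        exact ⟨0, zero_mem X, by rw [map_zero, hfj], Or.inr rfl⟩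
    choose xf hxX hxphi hxor using hchoice
    have hsum' : ∀ t : WIdx n, phi F n i₀ z t = ∑ j : Fin n, phi F n j (xf j) t := by
      intro t
      have h1 : (f.sum fun _i xi => xi) = ∑ j : Fin n, f j :=
        Finsupp.sum_fintype _ _ fun _ => rfl
      rw [← hsum, h1]
      rw [Finset.sum_apply]
      refine Finset.sum_congr rfl fun j _ => ?_
      rw [hxphi j]
    -- (b): xf κ is supported on second index ≥ i₀
    have hxs : ∀ q : VIdx n, (q.1.2 : ℕ) < (i₀ : ℕ) → xf κ q = 0 := by
      intro q hq
      have haκ : q.1.2 ≤ κ := by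
        rw [Fin.le_def]
        have := hκ
        rw [Fin.lt_def] at this
        omega
      have hL := hsum' ⟨(q.1.1, q.1.2, κ), ⟨q.2, haκ⟩⟩
      rw [phi_eval_lowmid_zero i₀ z hzs hq q.2 haκ] at hL
      rw [Finset.sum_eq_single κ] at hL
      · rw [phi_eval_high i₀ κ (xf κ) (le_of_lt hq) hκ q.2 haκ, if_pos rfl] at hL
        exact hL.symm
      · intro j _ hjκ
        rcases hxor j with hj | hj
        · rw [phi_eval_high i₀ j (xf j) (le_of_lt hq) hj q.2 haκ,
            if_neg (fun he => hjκ he.symm)]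
        · rw [hj, map_zero]
          rfl
      · intro hmem
        exact absurd (Finset.mem_univ _) hmem
    refine ⟨xf κ, ⟨hxX κ, hxs⟩, ?_⟩
    funext β
    by_cases hβ : i₀ < β
    · have hL := hsum' ⟨(β, i₀, κ), ⟨hβ, le_of_lt hκ⟩⟩
      rw [phi_eval_mid i₀ z hzs hβ hκ] at hL
      rw [Finset.sum_eq_single κ] at hL
      · rw [phi_eval_high i₀ κ (xf κ) (le_refl _) hκ hβ (le_of_lt hκ), if_pos rfl] at hL
        show pimap i₀ (xf κ) β = Cfun z β κ
        rw [pimap]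
        dsimp only [LinearMap.coe_mk, AddHom.coe_mk]
        rw [dif_pos hβ, ← hL]
      · intro j _ hjκ
        rcases hxor j with hj | hj
        · rw [phi_eval_high i₀ j (xf j) (le_refl _) hj hβ (le_of_lt hκ),
            if_neg (fun he => hjκ he.symm)]
        · rw [hj, map_zero]
          rfl
      · intro hmem
        exact absurd (Finset.mem_univ _) hmem
    · show pimap i₀ (xf κ) β = Cfun z β κ
      rw [pimap]
      dsimp only [LinearMap.coe_mk, AddHom.coe_mk]
      rw [dif_neg hβ, Cfun]
      have hβκ : β < κ := lt_of_le_of_lt (le_of_not_gt hβ) hκ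
      rw [dif_neg (asymm hβκ), dif_pos hβκ, hzs ⟨(κ, β), hβκ⟩
        (show (β : ℕ) ≤ (i₀ : ℕ) from le_of_not_gt (by rwa [Fin.lt_def] at hβ)), neg_zero]
  · have hcol : (fun β => Cfun z β κ) = 0 := by
      funext β
      rw [Pi.zero_apply, Cfun]
      split_ifs with h1 h2
      · exact hzs ⟨(β, κ), h1⟩
          (show (κ : ℕ) ≤ (i₀ : ℕ) from le_of_not_gt (by rwa [Fin.lt_def] at hκ))
      · rw [hzs ⟨(κ, β), h2⟩ (show (β : ℕ) ≤ (i₀ : ℕ) from by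
          rw [Fin.lt_def] at h2 hκ
          omega), neg_zero]
      · rfl
    rw [hcol]
    exact zero_mem _

lemma exists_g {m : ℕ} (U : Submodule F (Fin m → F)) :
    ∃ g : (Fin m → F) →ₗ[F] (Fin (Module.finrank F ↥U) → F),
      ∀ u ∈ U, g u = 0 → u = 0 := by
  obtain ⟨U', hc⟩ := Submodule.exists_isCompl U
  let b := Module.finBasis F ↥U
  refine ⟨b.equivFun.toLinearMap ∘ₗ U.linearProjOfIsCompl U' hc, fun u hu h0 => ?_⟩
  have h1 : U.linearProjOfIsCompl U' hc u = ⟨u, hu⟩ :=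
    Submodule.linearProjOfIsCompl_apply_left hc ⟨u, hu⟩
  have h2 : b.equivFun (⟨u, hu⟩ : ↥U) = 0 := by
    rw [← h1]
    exact h0
  have h3 : (⟨u, hu⟩ : ↥U) = 0 := by
    have := b.equivFun.map_eq_zero_iff.mp h2
    exact this
  exact Subtype.ext_iff.mp h3

lemma gexp {m e : ℕ} (g : (Fin m → F) →ₗ[F] (Fin e → F)) (x : Fin m → F) (s : Fin e) :
    g x s = ∑ β : Fin m, x β * g (Pi.single β 1) s := by
  have hsing : ∀ (β : Fin m) (c : F), (Pi.single β c : Fin m → F) = c • (Pi.single β (1 : F) : Fin m → F) := by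
    intro β c
    rw [← Pi.single_smul, smul_eq_mul, mul_one]
  conv_lhs => rw [← Finset.univ_sum_single x]
  rw [map_sum, Finset.sum_apply]
  refine Finset.sum_congr rfl fun β _ => ?_
  rw [hsing, map_smul]
  rfl

lemma finrank_le_choose (hchar : (2 : F) ≠ 0) (U : Submodule F (Fin n → F))
    (Z' : Submodule F (V F n))
    (hcols : ∀ z ∈ Z', ∀ κ : Fin n, (fun β => Cfun z β κ) ∈ U) :
    Module.finrank F ↥Z' ≤ (Module.finrank F ↥U).choose 2 := by
  classical
  set e := Module.finrank F ↥U with he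
  obtain ⟨g, Hg⟩ := exists_g U
  -- the bilinear image
  set P : V F n → Fin e → Fin e → F :=
    fun z t s => g (fun β => g (fun κ => Cfun z β κ) t) s with hP
  have Cfun_add : ∀ (x y : V F n) β κ, Cfun (x + y) β κ = Cfun x β κ + Cfun y β κ := by
    intro x y β κ
    unfold Cfun
    split_ifs <;> simp <;> ring
  have Cfun_smul : ∀ (c : F) (x : V F n) β κ, Cfun (c • x) β κ = c * Cfun x β κ := by
    intro c x β κ
    unfold Cfun
    split_ifs <;> simp [mul_neg] <;> ring
  have hPsi : ∀ z t s, P z t s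
      = ∑ β : Fin n, ∑ κ : Fin n,
          Cfun z β κ * g (Pi.single κ 1) t * g (Pi.single β 1) s := by
    intro z t s
    show g (fun β => g (fun κ => Cfun z β κ) t) s = _
    rw [gexp g _ s]
    refine Finset.sum_congr rfl fun β _ => ?_
    rw [gexp g _ t, Finset.sum_mul]
  have hanti : ∀ z t s, P z t s = - P z s t := by
    intro z t s
    rw [hPsi, hPsi, Finset.sum_comm, ← Finset.sum_neg_distrib]
    refine Finset.sum_congr rfl fun β _ => ?_
    rw [← Finset.sum_neg_distrib]
    refine Finset.sum_congr rfl fun κ _ => ?_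
    rw [Cfun_anti z β κ]
    ring
  have hdiag : ∀ z s, P z s s = 0 := by
    intro z s
    have h1 := hanti z s s
    have h2 : (2 : F) * P z s s = 0 := by
      rw [two_mul]
      nth_rewrite 1 [h1]
      exact neg_add_cancel _
    rcases mul_eq_zero.mp h2 with h | h
    · exact absurd h hchar
    · exact h
  -- the injection
  set Θ : V F n →ₗ[F] ({st : Fin e × Fin e // st.2 < st.1} → F) :=
    { toFun := fun z st => P z st.1.2 st.1.1
      map_add' := by
        intro x y
        funext st
        show P (x + y) st.1.2 st.1.1 = P x st.1.2 st.1.1 + P y st.1.2 st.1.1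
        rw [hPsi, hPsi, hPsi, ← Finset.sum_add_distrib]
        refine Finset.sum_congr rfl fun β _ => ?_
        rw [← Finset.sum_add_distrib]
        refine Finset.sum_congr rfl fun κ _ => ?_
        rw [Cfun_add]
        ring
      map_smul' := by
        intro c x
        funext st
        show P (c • x) st.1.2 st.1.1 = c * P x st.1.2 st.1.1
        rw [hPsi, hPsi, Finset.mul_sum]
        refine Finset.sum_congr rfl fun β _ => ?_
        rw [Finset.mul_sum]
        refine Finset.sum_congr rfl fun κ _ => ?_
        rw [Cfun_smul]
        ring } with hΘ
  have hinj : ∀ z ∈ Z', Θ z = 0 → z = 0 := by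
    intro z hzZ h0
    have hlow : ∀ s t : Fin e, t < s → P z t s = 0 := by
      intro s t hts
      have := congrFun h0 ⟨(s, t), hts⟩
      exact this
    have hall : ∀ t s : Fin e, P z t s = 0 := by
      intro t s
      rcases lt_trichotomy t s with h | h | h
      · exact hlow s t h
      · subst h
        exact hdiag z t
      · rw [hanti]
        rw [hlow t s h, neg_zero]
    have hvt : ∀ t : Fin e, (fun β => g (fun κ => Cfun z β κ) t) = 0 := by
      intro t
      have hmem : (fun β => g (fun κ => Cfun z β κ) t) ∈ U := by
        have hrep : (fun β => g (fun κ => Cfun z β κ) t)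
            = ∑ κ : Fin n, (g (Pi.single κ 1) t) • (fun β => Cfun z β κ) := by
          funext β
          rw [Finset.sum_apply]
          rw [gexp g _ t]
          refine Finset.sum_congr rfl fun κ _ => ?_
          rw [Pi.smul_apply, smul_eq_mul, mul_comm]
        rw [hrep]
        exact Submodule.sum_mem _ fun κ _ => Submodule.smul_mem _ _ (hcols z hzZ κ)
      refine Hg _ hmem ?_
      funext s
      exact hall t s
    have hrow : ∀ β : Fin n, (fun κ => Cfun z β κ) = 0 := by
      intro β
      have hmem : (fun κ => Cfun z β κ) ∈ U := by
        have hrep : (fun κ => Cfun z β κ) = -(fun κ => Cfun z κ β) := by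
          funext κ
          rw [Pi.neg_apply, ← Cfun_anti]
        rw [hrep]
        exact Submodule.neg_mem _ (hcols z hzZ β)
      refine Hg _ hmem ?_
      funext t
      exact congrFun (hvt t) β
    funext q
    have := congrFun (hrow q.1.1) q.1.2
    rw [Cfun_self] at this
    exact this
  -- conclude
  have hker : Function.Injective (Θ ∘ₗ Z'.subtype) := by
    rw [← LinearMap.ker_eq_bot]
    rw [Submodule.eq_bot_iff]
    intro m hm
    exact Subtype.ext (hinj m.1 m.2 hm)
  have hle := LinearMap.finrank_le_finrank_of_injective hker
  refine le_trans hle ?_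
  rw [Module.finrank_fintype_fun_eq_card]
  -- card of strict lower pairs
  have hcard : Fintype.card {st : Fin e × Fin e // st.2 < st.1}
      = Fintype.card (Σ s : Fin e, Fin (s : ℕ)) := by
    refine Fintype.card_congr ⟨fun st => ⟨st.1.1, ⟨st.1.2.1, st.2⟩⟩,
      fun p => ⟨(p.1, ⟨p.2.1, lt_trans p.2.2 p.1.2⟩), p.2.2⟩, ?_, ?_⟩
    · intro st
      rfl
    · intro p
      rfl
  rw [hcard, Fintype.card_sigma]
  have h1 : ∀ s : Fin e, Fintype.card (Fin (s : ℕ)) = (s : ℕ) := fun s => Fintype.card_fin _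
  rw [Finset.sum_congr rfl fun s _ => h1 s]
  rw [Fin.sum_univ_eq_sum_range (fun i => i) e]
  rw [Nat.choose_two_right, ← Finset.sum_range_id_mul_two e, Nat.mul_div_cancel _ two_pos]

set_option synthInstance.maxHeartbeats 800000 in
set_option maxHeartbeats 1000000 in
lemma dim_split (X : Submodule F (V F n)) (i₀ : Fin n) :
    Module.finrank F ↥(X ⊓ Smod F n (i₀ : ℕ))
      = Module.finrank F ↥((X ⊓ Smod F n (i₀ : ℕ)).map (pimap i₀))
        + Module.finrank F ↥(X ⊓ Smod F n ((i₀ : ℕ) + 1)) := by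
  set D := X ⊓ Smod F n (i₀ : ℕ) with hD
  have hrn := LinearMap.finrank_range_add_finrank_ker ((pimap i₀) ∘ₗ D.subtype)
  have hrange : LinearMap.range ((pimap i₀) ∘ₗ D.subtype) = D.map (pimap i₀) := by
    rw [LinearMap.range_comp, Submodule.range_subtype]
  have hle : X ⊓ Smod F n ((i₀ : ℕ) + 1) ≤ D := by
    refine inf_le_inf le_rfl ?_
    intro x hx
    rw [mem_Smod] at hx ⊢
    intro q hq
    exact hx q (by omega)
  have hker : LinearMap.ker ((pimap i₀) ∘ₗ D.subtype)
      = Submodule.comap D.subtype (X ⊓ Smod F n ((i₀ : ℕ) + 1)) := by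
    ext x
    simp only [LinearMap.mem_ker, LinearMap.comp_apply, Submodule.mem_comap,
      Submodule.coe_subtype]
    constructor
    · intro h0
      refine ⟨x.2.1, fun q hq => ?_⟩
      by_cases hlt : (q.1.2 : ℕ) < (i₀ : ℕ)
      · exact x.2.2 q hlt
      · have heq : q.1.2 = i₀ := Fin.ext (by omega)
        have hi : i₀ < q.1.1 := heq ▸ q.2
        have h1 := congrFun h0 q.1.1
        rw [pimap] at h1
        dsimp only [LinearMap.coe_mk, AddHom.coe_mk] at h1
        rw [dif_pos hi] at h1
        have hqe : q = ⟨(q.1.1, i₀), hi⟩ := Subtype.ext (Prod.ext rfl heq)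
        rw [hqe]
        exact h1
    · intro hmem
      funext β
      rw [pimap]
      dsimp only [LinearMap.coe_mk, AddHom.coe_mk]
      by_cases h : i₀ < β
      · rw [dif_pos h]
        exact hmem.2 ⟨(β, i₀), h⟩ (show ((i₀ : Fin n) : ℕ) < (i₀ : ℕ) + 1 by omega)
      · rw [dif_neg h]
        rfl
  rw [hrange, hker] at hrn
  have hfr : Module.finrank F ↥(Submodule.comap D.subtype (X ⊓ Smod F n ((i₀ : ℕ) + 1)))
      = Module.finrank F ↥(X ⊓ Smod F n ((i₀ : ℕ) + 1)) :=
    LinearEquiv.finrank_eq (Submodule.comapSubtypeEquivOfLe hle)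
  rw [← hrn, hfr]

lemma arith (d r : ℕ) (h1 : r ≤ d) (h2 : r ≤ (d - r).choose 2) :
    (r : ℤ) ≤ (d : ℤ) - ⌈(Real.sqrt (8 * (d : ℝ) + 1) - 1) / 2⌉ := by
  set s := d - r with hs
  have hds : r + s = d := by omega
  have h3 : r ≤ s * (s - 1) / 2 := by rwa [Nat.choose_two_right] at h2
  have hkey : s * (s - 1) + s = s * s := by
    rcases s with _ | k
    · simp
    · simp only [Nat.succ_sub_one]
      ring
  have h4 : 2 * d ≤ s * s + s := by omega
  have hsqrt : Real.sqrt (8 * (d : ℝ) + 1) ≤ 2 * (s : ℝ) + 1 := by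
    have h8 : (8 : ℝ) * (d : ℝ) + 1 ≤ (2 * (s : ℝ) + 1) ^ 2 := by
      have h4' : (2 : ℝ) * (d : ℝ) ≤ (s : ℝ) * (s : ℝ) + (s : ℝ) := by
        exact_mod_cast h4
      nlinarith
    calc Real.sqrt (8 * (d : ℝ) + 1) ≤ Real.sqrt ((2 * (s : ℝ) + 1) ^ 2) :=
          Real.sqrt_le_sqrt h8
      _ = 2 * (s : ℝ) + 1 := Real.sqrt_sq (by positivity)
  have hceil : ⌈(Real.sqrt (8 * (d : ℝ) + 1) - 1) / 2⌉ ≤ (s : ℤ) := by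
    apply Int.ceil_le.mpr
    push_cast
    linarith
  have : (r : ℤ) + (s : ℤ) = (d : ℤ) := by exact_mod_cast hds
  linarith

/-- For `i₀` with `1 ≤ i₀ ≤ n − 2` (0-based: `i₀ + 3 ≤ n`), setting
`d = dim(X ∩ span{v[j,i] : i₀ ≤ i < j ≤ n})`, one has `dim Z ≤ r(d)`; equivalently,
`dim Z ≤ d − ⌈(√(8d+1) − 1)/2⌉`. -/
theorem statement13 (p : ℕ) [Fact p.Prime] (hp2 : p ≠ 2) (n : ℕ) (hn : 1 < n)
    (X : Submodule (ZMod p) (V (ZMod p) n)) (i₀ : Fin n) (hi₀ : (i₀ : ℕ) + 3 ≤ n) :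
    Module.finrank (ZMod p) ↥(Zsub (ZMod p) n X i₀) ≤
      rfun (Module.finrank (ZMod p) ↥(Dsub (ZMod p) n X (i₀ : ℕ))) ∧
    (Module.finrank (ZMod p) ↥(Zsub (ZMod p) n X i₀) : ℤ) ≤
      (Module.finrank (ZMod p) ↥(Dsub (ZMod p) n X (i₀ : ℕ)) : ℤ) -
        ⌈(Real.sqrt (8 * (Module.finrank (ZMod p) ↥(Dsub (ZMod p) n X (i₀ : ℕ)) : ℝ) + 1)
            - 1) / 2⌉ := by
  have hp := (Fact.out : p.Prime)
  have hchar : (2 : ZMod p) ≠ 0 := by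
    intro h
    have h2 : ((2 : ℕ) : ZMod p) = 0 := by exact_mod_cast h
    rw [ZMod.natCast_eq_zero_iff] at h2
    exact hp2 ((Nat.prime_dvd_prime_iff_eq hp Nat.prime_two).mp h2)
  have hDeq : Dsub (ZMod p) n X (i₀ : ℕ) = X ⊓ Smod (ZMod p) n (i₀ : ℕ) := by
    unfold Dsub
    rw [span_v_eq_Smod]
  have hsplit := dim_split X i₀
  have hZD0 : Zsub (ZMod p) n X i₀ ≤ X ⊓ Smod (ZMod p) n ((i₀ : ℕ) + 1) := by
    intro z hz
    exact ⟨hz.1, fun q hq => Zsub_support hz q (by omega)⟩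
  have hr1 : Module.finrank (ZMod p) ↥(Zsub (ZMod p) n X i₀)
      ≤ Module.finrank (ZMod p) ↥(X ⊓ Smod (ZMod p) n ((i₀ : ℕ) + 1)) :=
    Submodule.finrank_mono hZD0
  have hr2 := finrank_le_choose hchar ((X ⊓ Smod (ZMod p) n (i₀ : ℕ)).map (pimap i₀))
      (Zsub (ZMod p) n X i₀) (fun z hz κ => col_mem X i₀ hz κ)
  set r := Module.finrank (ZMod p) ↥(Zsub (ZMod p) n X i₀) with hrdef
  set d := Module.finrank (ZMod p) ↥(Dsub (ZMod p) n X (i₀ : ℕ)) with hddef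
  have hd : d = Module.finrank (ZMod p) ↥(X ⊓ Smod (ZMod p) n (i₀ : ℕ)) := by
    rw [hddef, hDeq]
  have hle1 : r ≤ d := by omega
  have hle2 : r ≤ (d - r).choose 2 := le_trans hr2 (Nat.choose_le_choose 2 (by omega))
  refine ⟨?_, ?_⟩
  · unfold rfun
    exact Nat.le_findGreatest hle1 ⟨hle1, hle2⟩
  · exact arith d r hle1 hle2
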